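/- For every real x ≥ 0, x²·log(x²) ≤ 5(x-1)² + (x² - 1) + (x-2)₊² · log((x-2)₊²), where (y)₊ = max(y, 0) and the convention 0·log 0 = 0 is used. -/

import Mathlib

open Real

theorem stmt6 (x : ℝ) (hx : 0 ≤ x) :
    x ^ 2 * Real.log (x ^ 2) ≤
      5 * (x - 1) ^ 2 + (x ^ 2 - 1) +
        (max (x - 2) 0) ^ 2 * Real.log ((max (x - 2) 0) ^ 2) := by
  rcases le_or_gt x 2 with h2 | h2
  · have hm : max (x - 2) 0 = 0 := max_eq_right (by linarith)
    rw [hm]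
    norm_num [Real.log_zero]
    rcases eq_or_lt_of_le hx with h0 | h0
    · rw [← h0]
      norm_num [Real.log_zero]
    · have hlog : 2 * Real.log x ≤ 2 * (x - 1) := by
        have := Real.log_le_sub_one_of_pos h0
        linarith
      have key : x ^ 2 * (2 * Real.log x) ≤ x ^ 2 * (2 * (x - 1)) :=
        mul_le_mul_of_nonneg_left hlog (sq_nonneg x)
      have hcube : 0 ≤ (x - 1) ^ 2 * (2 - x) :=
        mul_nonneg (sq_nonneg _) (by linarith)
      nlinarith [key, hcube]
  · have hm : max (x - 2) 0 = x - 2 := max_eq_left (by linarith)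
    rw [hm]
    have hu0 : (0:ℝ) < x - 2 := by linarith
    have hx0 : (0:ℝ) < x := by linarith
    have hlx : Real.log (x ^ 2) = 2 * Real.log x := by
      rw [show x ^ 2 = x * x by ring, Real.log_mul hx0.ne' hx0.ne']; ring
    have hlu : Real.log ((x - 2) ^ 2) = 2 * Real.log (x - 2) := by
      rw [show (x - 2) ^ 2 = (x - 2) * (x - 2) by ring,
        Real.log_mul hu0.ne' hu0.ne']; ring
    have h1 : Real.log x - Real.log (x - 2) ≤ 2 / (x - 2) := by
      rw [← Real.log_div hx0.ne' hu0.ne']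
      have h := Real.log_le_sub_one_of_pos (div_pos hx0 hu0)
      have heq : x / (x - 2) - 1 = 2 / (x - 2) := by field_simp; ring
      linarith
    have h1u : (x - 2) ^ 2 * (Real.log x - Real.log (x - 2)) ≤ 2 * (x - 2) := by
      have h := mul_le_mul_of_nonneg_left h1 (sq_nonneg (x - 2))
      have heq : (x - 2) ^ 2 * (2 / (x - 2)) = 2 * (x - 2) := by
        field_simp
      linarith
    have h2' : Real.log x ≤ Real.log 2 + (x - 2) / 2 := by
      have hxe : x = 2 * (1 + (x - 2) / 2) := by ring
      rw [hxe, Real.log_mul two_ne_zero (by positivity)]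
      have := Real.log_le_sub_one_of_pos (show (0:ℝ) < 1 + (x - 2) / 2 by positivity)
      linarith
    have hl2 : Real.log 2 < 0.6931471808 := Real.log_two_lt_d9
    have h2u : (4 * x - 4) * Real.log x ≤ (4 * x - 4) * (Real.log 2 + (x - 2) / 2) :=
      mul_le_mul_of_nonneg_left h2' (by linarith)
    have hl2u : (8 * x - 8) * Real.log 2 < (8 * x - 8) * 0.6931471808 :=
      mul_lt_mul_of_pos_left hl2 (by linarith)
    have hsq : 0 < (x - 2) * (x - 2) := mul_pos hu0 hu0
    rw [hlx, hlu]
    nlinarith [h1u, h2u, hl2u, hsq]
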